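/- Let F be a d-regular locally sparse graph on [n]. For any pair of adjacent vertices x, y in F and any integer v with 3 ≤ v ≤ n−3, there are at most two closed subgraphs of F on v vertices that contain x and do not contain y. -/

import Mathlib

open SimpleGraph

/-- The edge boundary of a subgraph `H` of `G`: edges of `G` with one endpoint in `H.verts`
and the other outside. -/
def edgeBoundary {V : Type*} (G : SimpleGraph V) (H : G.Subgraph) : Set (Sym2 V) :=
  {e | ∃ u v, e = s(u, v) ∧ G.Adj u v ∧ u ∈ H.verts ∧ v ∉ H.verts}

/-- `G` is `d`-regular. -/
def IsRegularGraph {V : Type*} (G : SimpleGraph V) (d : ℕ) : Prop :=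
  ∀ v, (G.neighborSet v).ncard = d

/-- `G` on `n` vertices is locally sparse: every subgraph on between 3 and `n - 3`
vertices has edge boundary of size at least `d + 1`. -/
def LocallySparse {n : ℕ} (G : SimpleGraph (Fin n)) (d : ℕ) : Prop :=
  ∀ H : G.Subgraph, 3 ≤ H.verts.ncard → H.verts.ncard ≤ n - 3 →
    d + 1 ≤ (edgeBoundary G H).ncard

/-- `Δ = d + 1` for odd `d`, `Δ = d + 2` for even `d`. -/
def Delta (d : ℕ) : ℕ := if Odd d then d + 1 else d + 2

/-- A closed subgraph: an induced subgraph whose edge boundary has size exactly `Δ`. -/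
def IsClosedSubgraph {V : Type*} (G : SimpleGraph V) (d : ℕ) (H : G.Subgraph) : Prop :=
  H.IsInduced ∧ (edgeBoundary G H).ncard = Delta d

namespace AMT


variable {n : ℕ} (G : SimpleGraph (Fin n))

def PP (S T : Set (Fin n)) : Set (Fin n × Fin n) :=
  {p | G.Adj p.1 p.2 ∧ p.1 ∈ S ∧ p.2 ∈ T}

noncomputable def D (S T : Set (Fin n)) : ℕ := (PP G S T).ncard

noncomputable def Fb (S : Set (Fin n)) : ℕ := D G S Sᶜ

variable {G}

lemma D_comm (S T : Set (Fin n)) : D G S T = D G T S := by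
  unfold D
  have h : PP G T S = Prod.swap '' PP G S T := by
    ext ⟨u, w⟩
    simp only [PP, Set.mem_setOf_eq, Set.mem_image, Prod.exists, Prod.swap_prod_mk,
      Prod.mk.injEq]
    constructor
    · rintro ⟨h1, h2, h3⟩; exact ⟨w, u, ⟨h1.symm, h3, h2⟩, rfl, rfl⟩
    · rintro ⟨a, b, ⟨h1, h2, h3⟩, rfl, rfl⟩; exact ⟨h1.symm, h3, h2⟩
  rw [h, Set.ncard_image_of_injective _ Prod.swap_injective]

lemma D_union_left {S S' : Set (Fin n)} (h : Disjoint S S') (T : Set (Fin n)) :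
    D G (S ∪ S') T = D G S T + D G S' T := by
  unfold D
  have he : PP G (S ∪ S') T = PP G S T ∪ PP G S' T := by
    ext ⟨u, w⟩
    simp only [PP, Set.mem_setOf_eq, Set.mem_union]
    tauto
  have hd : Disjoint (PP G S T) (PP G S' T) := by
    rw [Set.disjoint_left]
    rintro ⟨u, w⟩ ⟨_, hu, _⟩ ⟨_, hu', _⟩
    exact (Set.disjoint_left.mp h hu) hu'
  rw [he, Set.ncard_union_eq hd (Set.toFinite _) (Set.toFinite _)]

lemma D_union_right (S : Set (Fin n)) {T T' : Set (Fin n)} (h : Disjoint T T') :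
    D G S (T ∪ T') = D G S T + D G S T' := by
  rw [D_comm, D_union_left h, D_comm S T, D_comm S T']

lemma D_mono {S S' T T' : Set (Fin n)} (hS : S ⊆ S') (hT : T ⊆ T') :
    D G S T ≤ D G S' T' := by
  apply Set.ncard_le_ncard _ (Set.toFinite _)
  rintro ⟨u, w⟩ ⟨h1, h2, h3⟩
  exact ⟨h1, hS h2, hT h3⟩

lemma one_le_D {S T : Set (Fin n)} {u w : Fin n} (h : G.Adj u w) (hu : u ∈ S) (hw : w ∈ T) :
    1 ≤ D G S T := by
  exact (Set.ncard_pos (Set.toFinite _)).mpr ⟨(u, w), h, hu, hw⟩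

lemma D_singleton (a : Fin n) (T : Set (Fin n)) :
    D G {a} T = (G.neighborSet a ∩ T).ncard := by
  unfold D
  have h : PP G {a} T = (fun w => (a, w)) '' (G.neighborSet a ∩ T) := by
    ext ⟨u, w⟩
    simp only [PP, Set.mem_setOf_eq, Set.mem_singleton_iff, Set.mem_image, Set.mem_inter_iff,
      mem_neighborSet, Prod.mk.injEq]
    constructor
    · rintro ⟨h1, rfl, h3⟩; exact ⟨w, ⟨h1, h3⟩, rfl, rfl⟩
    · rintro ⟨b, ⟨h1, h2⟩, rfl, rfl⟩; exact ⟨h1, rfl, h2⟩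
  rw [h, Set.ncard_image_of_injective _ (fun a b h => (Prod.mk.injEq _ _ _ _ ▸ h).2)]

lemma D_singleton_self (a : Fin n) : D G {a} {a} = 0 := by
  unfold D
  rw [Set.ncard_eq_zero (Set.toFinite _)]
  ext ⟨u, w⟩
  simp only [PP, Set.mem_setOf_eq, Set.mem_singleton_iff, Set.mem_empty_iff_false, iff_false]
  rintro ⟨h1, rfl, rfl⟩
  exact G.loopless.irrefl _ h1

lemma D_singleton_le_one (a b : Fin n) : D G {a} {b} ≤ 1 := by
  rw [D_singleton]
  exact le_trans (Set.ncard_le_ncard Set.inter_subset_right (Set.toFinite _))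
    (by simp [Set.ncard_singleton])



lemma edgeBoundary_ncard (H : G.Subgraph) :
    (edgeBoundary G H).ncard = Fb G H.verts := by
  unfold Fb D
  have h : edgeBoundary G H = (fun p : Fin n × Fin n => s(p.1, p.2)) '' PP G H.verts H.vertsᶜ := by
    ext e
    simp only [edgeBoundary, Set.mem_setOf_eq, Set.mem_image, Prod.exists]
    constructor
    · rintro ⟨u, w, rfl, h1, h2, h3⟩; exact ⟨u, w, ⟨h1, h2, h3⟩, rfl⟩
    · rintro ⟨u, w, ⟨h1, h2, h3⟩, rfl⟩; exact ⟨u, w, rfl, h1, h2, h3⟩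
  rw [h]
  apply Set.ncard_image_of_injOn
  rintro ⟨u, w⟩ ⟨h1, h2, h3⟩ ⟨u', w'⟩ ⟨h1', h2', h3'⟩ he
  rcases Sym2.eq_iff.mp he with ⟨rfl, rfl⟩ | ⟨rfl, rfl⟩
  · rfl
  · exact absurd h2 h3'

variable {d : ℕ}

lemma D_singleton_univ (hreg : IsRegularGraph G d) (a : Fin n) :
    D G {a} Set.univ = d := by
  rw [D_singleton, Set.inter_univ, hreg]

lemma Fb_singleton (hreg : IsRegularGraph G d) (a : Fin n) : Fb G {a} = d := by
  unfold Fb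
  rw [D_singleton]
  rw [Set.inter_eq_self_of_subset_left (fun w hw => ?_), hreg]
  intro hw'
  simp only [Set.mem_singleton_iff] at hw'
  subst hw'
  exact G.loopless.irrefl _ hw

lemma add_vertex (hreg : IsRegularGraph G d) {S : Set (Fin n)} {a : Fin n} (ha : a ∉ S) :
    Fb G (S ∪ {a}) + 2 * D G {a} S = Fb G S + d := by
  have hsub : S ⊆ (S ∪ {a}) := Set.subset_union_left
  have h1 : Sᶜ = (S ∪ {a})ᶜ ∪ {a} := by
    rw [Set.compl_union]
    ext z
    by_cases hz : z = a <;> simp [hz, ha]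
  have hd1 : Disjoint ((S ∪ {a})ᶜ : Set (Fin n)) {a} := by
    rw [Set.disjoint_right]
    intro z hz
    simp only [Set.mem_singleton_iff] at hz
    subst hz
    simp [Set.mem_compl_iff]
  have e1 : Fb G S = D G S (S ∪ {a})ᶜ + D G S {a} := by
    rw [Fb, h1, D_union_right _ hd1]
  have h2 : (Set.univ : Set (Fin n)) = S ∪ ((S ∪ {a})ᶜ ∪ {a}) := by
    rw [← h1]; simp
  have e2 : (d : ℕ) = D G {a} S + D G {a} (S ∪ {a})ᶜ := by
    have := D_singleton_univ hreg (G := G) a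
    rw [h2, D_union_right _ ?hd, D_union_right _ hd1, D_singleton_self] at this
    · omega
    case hd =>
      rw [← h1]; exact disjoint_compl_right
  have e3 : Fb G (S ∪ {a}) = D G S (S ∪ {a})ᶜ + D G {a} (S ∪ {a})ᶜ := by
    rw [Fb, D_union_left (by simpa using ha)]
  have e4 : D G S {a} = D G {a} S := D_comm _ _
  omega

lemma Fb_compl (S : Set (Fin n)) : Fb G S = Fb G Sᶜ := by
  unfold Fb
  rw [compl_compl, D_comm]

set_option maxHeartbeats 1000000 in
lemma pair_identity (A B : Set (Fin n)) :
    Fb G A + Fb G B = Fb G (A \ B) + Fb G (B \ A) + 2 * D G (A ∩ B) (A ∪ B)ᶜ := by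
  set P1 := A \ B with hP1
  set Q := B \ A with hQ
  set I := A ∩ B with hI
  set R := (A ∪ B)ᶜ with hR
  have mem : ∀ z : Fin n, (z ∈ P1 ↔ z ∈ A ∧ z ∉ B) ∧ (z ∈ Q ↔ z ∈ B ∧ z ∉ A) ∧
      (z ∈ I ↔ z ∈ A ∧ z ∈ B) ∧ (z ∈ R ↔ ¬(z ∈ A ∨ z ∈ B)) := fun z =>
    ⟨Iff.rfl, Iff.rfl, Iff.rfl, Iff.rfl⟩
  have dPQ : Disjoint P1 Q := Set.disjoint_left.mpr (fun z h1 h2 => by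
    have := mem z; tauto)
  have dPI : Disjoint P1 I := Set.disjoint_left.mpr (fun z h1 h2 => by
    have := mem z; tauto)
  have dQI : Disjoint Q I := Set.disjoint_left.mpr (fun z h1 h2 => by
    have := mem z; tauto)
  have dPR : Disjoint P1 R := Set.disjoint_left.mpr (fun z h1 h2 => by
    have := mem z; tauto)
  have dQR : Disjoint Q R := Set.disjoint_left.mpr (fun z h1 h2 => by
    have := mem z; tauto)
  have dIR : Disjoint I R := Set.disjoint_left.mpr (fun z h1 h2 => by
    have := mem z; tauto)
  have hA : A = P1 ∪ I := Set.ext (fun z => by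
    have := mem z; rw [Set.mem_union]; by_cases hz : z ∈ B <;> tauto)
  have hAc : Aᶜ = Q ∪ R := Set.ext (fun z => by
    have := mem z; rw [Set.mem_union, Set.mem_compl_iff]
    by_cases hz : z ∈ B <;> tauto)
  have hB : B = Q ∪ I := Set.ext (fun z => by
    have := mem z; rw [Set.mem_union]; by_cases hz : z ∈ A <;> tauto)
  have hBc : Bᶜ = P1 ∪ R := Set.ext (fun z => by
    have := mem z; rw [Set.mem_union, Set.mem_compl_iff]
    by_cases hz : z ∈ A <;> tauto)
  have hPc : P1ᶜ = I ∪ (Q ∪ R) := Set.ext (fun z => by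
    have := mem z; rw [Set.mem_union, Set.mem_union, Set.mem_compl_iff]
    by_cases hz : z ∈ A <;> by_cases hz' : z ∈ B <;> tauto)
  have hQc : Qᶜ = I ∪ (P1 ∪ R) := Set.ext (fun z => by
    have := mem z; rw [Set.mem_union, Set.mem_union, Set.mem_compl_iff]
    by_cases hz : z ∈ A <;> by_cases hz' : z ∈ B <;> tauto)
  have dI_QR : Disjoint I (Q ∪ R) := by
    rw [Set.disjoint_union_right]; exact ⟨dQI.symm, dIR⟩
  have dI_PR : Disjoint I (P1 ∪ R) := by
    rw [Set.disjoint_union_right]; exact ⟨dPI.symm, dIR⟩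
  have eA : Fb G A = (D G P1 Q + D G P1 R) + (D G I Q + D G I R) := by
    rw [Fb, hAc]
    nth_rewrite 1 [hA]
    rw [D_union_left dPI, D_union_right _ dQR, D_union_right _ dQR]
  have eB : Fb G B = (D G Q P1 + D G Q R) + (D G I P1 + D G I R) := by
    rw [Fb, hBc]
    nth_rewrite 1 [hB]
    rw [D_union_left dQI, D_union_right _ dPR, D_union_right _ dPR]
  have eP : Fb G P1 = D G P1 I + (D G P1 Q + D G P1 R) := by
    rw [Fb, hPc, D_union_right _ dI_QR, D_union_right _ dQR]
  have eQ : Fb G Q = D G Q I + (D G Q P1 + D G Q R) := by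
    rw [Fb, hQc, D_union_right _ dI_PR, D_union_right _ dPR]
  have s1 : D G I Q = D G Q I := D_comm _ _
  have s2 : D G I P1 = D G P1 I := D_comm _ _
  have s3 : D G P1 Q = D G Q P1 := D_comm _ _
  omega

lemma sparse_set (hls : LocallySparse G d) {S : Set (Fin n)} (h3 : 3 ≤ S.ncard)
    (hn : S.ncard ≤ n - 3) : d + 1 ≤ Fb G S := by
  have h := hls ((⊤ : G.Subgraph).induce S) (by simpa) (by simpa)
  rwa [edgeBoundary_ncard] at h

lemma D_empty_left (T : Set (Fin n)) : D G ∅ T = 0 := by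
  have h : PP G ∅ T = ∅ := by
    ext ⟨u, w⟩
    simp [PP]
  rw [D, h, Set.ncard_empty]

lemma D_univ_right (hreg : IsRegularGraph G d) (S : Set (Fin n)) :
    D G S Set.univ = d * S.ncard := by
  refine Set.Finite.induction_on (motive := fun s _ => D G s Set.univ = d * s.ncard) S (Set.toFinite S) (by simp [D_empty_left]) ?_
  intro a s ha hs ih
  have h : insert a s = {a} ∪ s := by simp
  rw [h, D_union_left (by simpa using ha), ih, D_singleton_univ hreg, ← h,
    Set.ncard_insert_of_notMem ha hs]
  ring

lemma even_D_self (S : Set (Fin n)) : Even (D G S S) := by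
  set L := {p ∈ PP G S S | p.1 < p.2} with hL
  set U := {p ∈ PP G S S | p.2 < p.1} with hU
  have hsplit : PP G S S = L ∪ U := by
    ext ⟨u, w⟩
    simp only [hL, hU, Set.mem_union, Set.mem_setOf_eq, Set.mem_sep_iff]
    constructor
    · intro h
      rcases lt_trichotomy u w with h' | h' | h'
      · exact Or.inl ⟨h, h'⟩
      · exact absurd h' (by rintro rfl; exact G.loopless.irrefl _ h.1)
      · exact Or.inr ⟨h, h'⟩
    · rintro (⟨h, _⟩ | ⟨h, _⟩) <;> exact h
  have hdisj : Disjoint L U := by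
    rw [Set.disjoint_left]
    rintro ⟨u, w⟩ ⟨_, h1⟩ ⟨_, h2⟩
    exact absurd (h1.trans h2) (lt_irrefl _)
  have himg : U = Prod.swap '' L := by
    ext ⟨u, w⟩
    simp only [hL, hU, Set.mem_image, Set.mem_sep_iff, Prod.exists, Prod.swap_prod_mk,
      Prod.mk.injEq, PP, Set.mem_setOf_eq]
    constructor
    · rintro ⟨⟨h1, h2, h3⟩, h4⟩; exact ⟨w, u, ⟨⟨h1.symm, h3, h2⟩, h4⟩, rfl, rfl⟩
    · rintro ⟨p, q, ⟨⟨h1, h2, h3⟩, h4⟩, rfl, rfl⟩; exact ⟨⟨h1.symm, h3, h2⟩, h4⟩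
  have : D G S S = L.ncard + U.ncard := by
    rw [D, hsplit, Set.ncard_union_eq hdisj (Set.toFinite _) (Set.toFinite _)]
  rw [this, himg, Set.ncard_image_of_injective _ Prod.swap_injective]
  exact ⟨_, rfl⟩

lemma even_Fb (hreg : IsRegularGraph G d) (hde : Even d) (S : Set (Fin n)) :
    Even (Fb G S) := by
  have hu : (Set.univ : Set (Fin n)) = S ∪ Sᶜ := by simp
  have h := D_univ_right hreg (G := G) S
  rw [hu, D_union_right _ disjoint_compl_right] at h
  have h2 := even_D_self (G := G) S
  have h3 : Even (d * S.ncard) := hde.mul_right _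
  rcases h2 with ⟨k, hk⟩
  rcases h3 with ⟨m, hm⟩
  refine ⟨m - k, ?_⟩
  have : Fb G S = D G S Sᶜ := rfl
  omega

lemma Fb_pair (hreg : IsRegularGraph G d) {a b : Fin n} (hab : a ≠ b) :
    2 * d ≤ Fb G {a, b} + 2 := by
  have h := add_vertex hreg (S := ({b} : Set (Fin n))) (a := a) (by simpa using hab)
  have h1 : ({b} : Set (Fin n)) ∪ {a} = {a, b} := by
    rw [Set.union_comm, Set.singleton_union]
  have h2 := D_singleton_le_one (G := G) a b
  rw [h1, Fb_singleton hreg] at h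
  omega

lemma Delta_le_Fb (hd : 3 ≤ d) (hreg : IsRegularGraph G d) (hls : LocallySparse G d)
    {S : Set (Fin n)} (h2 : 2 ≤ S.ncard) (hn : S.ncard ≤ n - 3) : Delta d ≤ Fb G S := by
  rcases Nat.lt_or_ge S.ncard 3 with hc | hc
  · have hc2 : S.ncard = 2 := le_antisymm (by omega) h2
    obtain ⟨a, b, hab, rfl⟩ := Set.ncard_eq_two.mp hc2
    have := Fb_pair hreg (G := G) hab
    rcases Nat.even_or_odd d with he | ho
    · obtain ⟨k, hk⟩ := he
      rw [Delta, if_neg (Nat.not_odd_iff_even.mpr ⟨k, hk⟩)]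
      omega
    · rw [Delta, if_pos ho]
      omega
  · have h1 := sparse_set hls hc hn
    rcases Nat.even_or_odd d with he | ho
    · obtain ⟨m, hm⟩ := even_Fb hreg he (G := G) S
      obtain ⟨k, hk⟩ := he
      rw [Delta, if_neg (Nat.not_odd_iff_even.mpr ⟨k, hk⟩)]
      omega
    · rw [Delta, if_pos ho]
      exact h1

lemma Delta_le (d : ℕ) : Delta d ≤ d + 2 := by
  rw [Delta]; split <;> omega

lemma d_lt_Delta (d : ℕ) : d < Delta d := by
  rw [Delta]; split <;> omega

lemma diff_union_inter' (A B : Set (Fin n)) : (A \ B) ∪ (A ∩ B) = A := by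
  ext z; by_cases hz : z ∈ B <;> simp [hz]

lemma ncard_diff_add (A B : Set (Fin n)) : (A \ B).ncard + (A ∩ B).ncard = A.ncard := by
  rw [← Set.ncard_union_eq ?hd (Set.toFinite _) (Set.toFinite _), diff_union_inter']
  case hd =>
    exact (Set.disjoint_sdiff_left (s := B) (t := A)).mono_right Set.inter_subset_right


section SetHelpers

variable {I : Set (Fin n)} {a b p : Fin n}

lemma setAuC (haI : a ∉ I) (hbI : b ∉ I) (hpI : p ∈ I) (hab : a ≠ b) (hpa : ¬ p = a) :
    (I ∪ {a}) ∪ (((I ∪ {a}) \ {p}) ∪ {b}) = (I ∪ {a}) ∪ {b} := by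
  ext z
  by_cases h1 : z ∈ I <;> by_cases h2 : z = a <;> by_cases h3 : z = b <;>
    by_cases h4 : z = p <;> simp_all

lemma setBuC (haI : a ∉ I) (hbI : b ∉ I) (hpI : p ∈ I) (hab : a ≠ b) (hpa : ¬ p = a) :
    (I ∪ {b}) ∪ (((I ∪ {a}) \ {p}) ∪ {b}) = (I ∪ {a}) ∪ {b} := by
  ext z
  by_cases h1 : z ∈ I <;> by_cases h2 : z = a <;> by_cases h3 : z = b <;>
    by_cases h4 : z = p <;> simp_all

lemma setACi (haI : a ∉ I) (hbI : b ∉ I) (hpI : p ∈ I) (hab : a ≠ b) (hpa : ¬ p = a) :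
    (I ∪ {a}) ∩ (((I ∪ {a}) \ {p}) ∪ {b}) = (I \ {p}) ∪ {a} := by
  ext z
  by_cases h1 : z ∈ I <;> by_cases h2 : z = a <;> by_cases h3 : z = b <;>
    by_cases h4 : z = p <;> simp_all

lemma setBCi (haI : a ∉ I) (hbI : b ∉ I) (hpI : p ∈ I) (hab : a ≠ b) (hpa : ¬ p = a) :
    (I ∪ {b}) ∩ (((I ∪ {a}) \ {p}) ∪ {b}) = (I \ {p}) ∪ {b} := by
  ext z
  by_cases h1 : z ∈ I <;> by_cases h2 : z = a <;> by_cases h3 : z = b <;>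
    by_cases h4 : z = p <;> simp_all

end SetHelpers

section Main


variable {d : ℕ} (hd : 3 ≤ d) (hreg : IsRegularGraph G d) (hls : LocallySparse G d)
  {x y : Fin n} (hxy : G.Adj x y) {vv : ℕ} (h3 : 3 ≤ vv) (hv : vv ≤ n - 3)

include hd hreg hls hxy h3 hv

lemma step1 {A B : Set (Fin n)}
    (hA : Fb G A = Delta d) (hB : Fb G B = Delta d)
    (hAv : A.ncard = vv) (hBv : B.ncard = vv)
    (hxA : x ∈ A) (hxB : x ∈ B) (hyA : y ∉ A) (hyB : y ∉ B) (hne : A ≠ B) :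
    (A \ B).ncard = 1 ∧ (B \ A).ncard = 1 := by
  have hn6 : 6 ≤ n := by omega
  have hIx : x ∈ A ∩ B := ⟨hxA, hxB⟩
  have hI1 : 1 ≤ (A ∩ B).ncard := (Set.ncard_pos (Set.toFinite _)).mpr ⟨x, hIx⟩
  have hcA := ncard_diff_add A B
  have hcB := ncard_diff_add B A
  rw [Set.inter_comm B A] at hcB
  have hPne : 1 ≤ (A \ B).ncard := by
    rcases Nat.eq_zero_or_pos (A \ B).ncard with h0 | h1
    · exfalso
      have hsub : A ⊆ B := by
        rw [Set.ncard_eq_zero (Set.toFinite _), Set.diff_eq_empty] at h0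
        exact h0
      exact hne (Set.eq_of_subset_of_ncard_le hsub (by omega) (Set.toFinite _))
    · exact h1
  have hQne : 1 ≤ (B \ A).ncard := by omega
  have hDIR : 1 ≤ D G (A ∩ B) (A ∪ B)ᶜ :=
    one_le_D hxy hIx (by simp only [Set.mem_compl_iff, Set.mem_union]; tauto)
  have hpi := pair_identity (G := G) A B
  rw [hA, hB] at hpi
  by_contra hcon
  have h2 : 2 ≤ (A \ B).ncard := by omega
  have h2' : 2 ≤ (B \ A).ncard := by omega
  have hle : (A \ B).ncard ≤ n - 3 := by omega
  have hle' : (B \ A).ncard ≤ n - 3 := by omega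
  have hFP := Delta_le_Fb hd hreg hls h2 hle
  have hFQ := Delta_le_Fb hd hreg hls h2' hle'
  omega

lemma no_three {A B C : Set (Fin n)}
    (hA : Fb G A = Delta d) (hB : Fb G B = Delta d) (hC : Fb G C = Delta d)
    (hAv : A.ncard = vv) (hBv : B.ncard = vv) (hCv : C.ncard = vv)
    (hxA : x ∈ A) (hxB : x ∈ B) (hxC : x ∈ C)
    (hyA : y ∉ A) (hyB : y ∉ B) (hyC : y ∉ C)
    (hAB : A ≠ B) (hAC : A ≠ C) (hBC : B ≠ C) : False := by
  have hn6 : 6 ≤ n := by omega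
  obtain ⟨hab1, hab2⟩ := step1 hd hreg hls hxy h3 hv hA hB hAv hBv hxA hxB hyA hyB hAB
  obtain ⟨hac1, hac2⟩ := step1 hd hreg hls hxy h3 hv hA hC hAv hCv hxA hxC hyA hyC hAC
  obtain ⟨hbc1, hbc2⟩ := step1 hd hreg hls hxy h3 hv hB hC hBv hCv hxB hxC hyB hyC hBC
  obtain ⟨a, ha⟩ := Set.ncard_eq_one.mp hab1
  obtain ⟨b, hb⟩ := Set.ncard_eq_one.mp hab2
  obtain ⟨p, hp⟩ := Set.ncard_eq_one.mp hac1
  obtain ⟨c, hc⟩ := Set.ncard_eq_one.mp hac2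
  set I := A ∩ B with hI
  have haA : a ∈ A ∧ a ∉ B := by
    have : a ∈ A \ B := ha ▸ rfl
    exact this
  have hbB : b ∈ B ∧ b ∉ A := by
    have : b ∈ B \ A := hb ▸ rfl
    exact this
  have hpA : p ∈ A ∧ p ∉ C := by
    have : p ∈ A \ C := hp ▸ rfl
    exact this
  have hcC : c ∈ C ∧ c ∉ A := by
    have : c ∈ C \ A := hc ▸ rfl
    exact this
  have hAeq : A = I ∪ {a} := by
    ext z
    simp only [Set.mem_union, Set.mem_singleton_iff, hI, Set.mem_inter_iff]
    constructor
    · intro hz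
      by_cases hzB : z ∈ B
      · exact Or.inl ⟨hz, hzB⟩
      · right
        have : z ∈ A \ B := ⟨hz, hzB⟩
        rw [ha] at this
        exact this
    · rintro (⟨hz, _⟩ | rfl) <;> [exact hz; exact haA.1]
  have hBeq : B = I ∪ {b} := by
    ext z
    simp only [Set.mem_union, Set.mem_singleton_iff, hI, Set.mem_inter_iff]
    constructor
    · intro hz
      by_cases hzA : z ∈ A
      · exact Or.inl ⟨hzA, hz⟩
      · right
        have : z ∈ B \ A := ⟨hz, hzA⟩
        rw [hb] at this
        exact this
    · rintro (⟨_, hz⟩ | rfl) <;> [exact hz; exact hbB.1]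
  have haI : a ∉ I := fun h => haA.2 h.2
  have hbI : b ∉ I := fun h => hbB.2 h.1
  have hxI : x ∈ I := ⟨hxA, hxB⟩
  have habne : a ≠ b := fun h => haA.2 (h ▸ hbB.1)
  have hIcard : I.ncard + 1 = vv := by
    have h := ncard_diff_add A B
    rw [ha, Set.ncard_singleton, hAv, ← hI] at h
    omega
  have hCeq : C = (A \ {p}) ∪ {c} := by
    ext z
    simp only [Set.mem_union, Set.mem_singleton_iff, Set.mem_diff]
    constructor
    · intro hz
      by_cases hzA : z ∈ A
      · left
        refine ⟨hzA, ?_⟩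
        rintro rfl
        exact hpA.2 hz
      · right
        have : z ∈ C \ A := ⟨hz, hzA⟩
        rw [hc] at this
        exact this
    · rintro (⟨hz, hzp⟩ | rfl)
      · by_contra hzC
        have : z ∈ A \ C := ⟨hz, hzC⟩
        rw [hp] at this
        exact hzp this
      · exact hcC.1
  have hIsubA : I ⊆ A := Set.inter_subset_left
  have hIsubB : I ⊆ B := Set.inter_subset_right
  by_cases hpa : p = a
  · -- Case (i): C = I ∪ {c}
    subst hpa
    have hCeq2 : C = I ∪ {c} := by
      rw [hCeq, hAeq]
      ext z
      simp only [Set.mem_union, Set.mem_singleton_iff, Set.mem_diff]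
      constructor
      · rintro (⟨hz1 | hz1, hz2⟩ | rfl)
        · exact Or.inl hz1
        · exact absurd hz1 hz2
        · exact Or.inr rfl
      · rintro (hz | rfl)
        · exact Or.inl ⟨Or.inl hz, fun h => haI (h ▸ hz)⟩
        · exact Or.inr rfl
    have hcA : c ∉ A := hcC.2
    have hcI : c ∉ I := fun h => hcA (hIsubA h)
    have hcb : c ≠ b := by
      rintro rfl
      exact hBC (hBeq.trans hCeq2.symm)
    have hAC' : A ∩ C = I := by
      rw [hAeq, hCeq2]
      ext z
      simp only [Set.mem_inter_iff, Set.mem_union, Set.mem_singleton_iff]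
      constructor
      · rintro ⟨hz1 | rfl, hz2 | hz2⟩
        · exact hz1
        · exact absurd (hz2 ▸ hz1) hcI
        · exact absurd hz2 haI
        · exact absurd (hz2 ▸ haA.1) hcA
      · intro hz
        exact ⟨Or.inl hz, Or.inl hz⟩
    have hpi := pair_identity (G := G) A C
    rw [hA, hC, hp, hc, hAC', Fb_singleton hreg, Fb_singleton hreg] at hpi
    have hbR : b ∉ A ∪ C := by
      rw [hCeq2]
      rintro (h | h)
      · exact hbB.2 h
      · rcases h with h | h
        · exact hbI h
        · exact hcb (Set.mem_singleton_iff.mp h).symm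
    have hyR : y ∉ A ∪ C := by
      rintro (h | h)
      · exact hyA h
      · exact hyC h
    have hby : b ≠ y := fun h => hyB (h ▸ hbB.1)
    have hav := add_vertex hreg (S := I) (a := b) hbI
    rw [← hBeq, hB] at hav
    have hFbI : Delta d ≤ Fb G I := by
      apply Delta_le_Fb hd hreg hls <;> omega
    have hbI2 : 2 ≤ D G {b} I := by omega
    have hsplit : D G I ({b} ∪ {y}) = D G I {b} + D G I {y} :=
      D_union_right _ (by simp [Set.disjoint_singleton, hby])
    have hmono : D G I ({b} ∪ {y}) ≤ D G I (A ∪ C)ᶜ := by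
      apply D_mono (le_refl _)
      rintro z (hz | hz) <;> rw [Set.mem_singleton_iff] at hz <;> subst hz
      · exact hbR
      · exact hyR
    have hyD : 1 ≤ D G I {y} := one_le_D hxy hxI rfl
    have hcomm : D G I {b} = D G {b} I := D_comm _ _
    have := Delta_le d
    omega
  · -- Case (ii): p ∈ I, c = b
    have hpI : p ∈ I := by
      have := hpA.1
      rw [hAeq] at this
      rcases this with h | h
      · exact h
      · exact absurd (Set.mem_singleton_iff.mp h) hpa
    obtain ⟨q, hq⟩ := Set.ncard_eq_one.mp hbc1
    obtain ⟨r, hr⟩ := Set.ncard_eq_one.mp hbc2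
    have hpq : p = q := by
      have : p ∈ B \ C := ⟨hIsubB hpI, hpA.2⟩
      rw [hq] at this
      exact this
    subst hpq
    have hcb : b = c := by
      rw [eq_comm]
      by_contra hcb
      have hbC : b ∉ C := by
        rw [hCeq]
        rintro (h | h)
        · exact hbB.2 h.1
        · exact hcb (Set.mem_singleton_iff.mp h).symm
      have : b ∈ B \ C := ⟨hbB.1, hbC⟩
      rw [hq] at this
      exact hbI (this ▸ hpI)
    subst hcb
    set U := (I ∪ {a}) ∪ {b} with hU
    have hra : a = r := by
      have : a ∈ C \ B := ⟨hCeq ▸ Or.inl ⟨haA.1, fun h => hpa (Set.mem_singleton_iff.mp h).symm⟩,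
        haA.2⟩
      rw [hr] at this
      exact Set.mem_singleton_iff.mp this
    subst hra
    have hAuB : A ∪ B = U := by
      rw [hAeq, hBeq, hU]
      ext z
      simp only [Set.mem_union, Set.mem_singleton_iff]
      tauto
    have hAuC : A ∪ C = U := by
      rw [hCeq, hAeq, hU]
      exact setAuC haI hbI hpI habne hpa
    have hBuC : B ∪ C = U := by
      rw [hCeq, hAeq, hBeq, hU]
      exact setBuC haI hbI hpI habne hpa
    have hACi : A ∩ C = (I \ {p}) ∪ {a} := by
      rw [hCeq, hAeq]
      exact setACi haI hbI hpI habne hpa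
    have hBCi : B ∩ C = (I \ {p}) ∪ {b} := by
      rw [hCeq, hAeq, hBeq]
      exact setBCi haI hbI hpI habne hpa
    have hxp : x ≠ p := by
      rintro rfl
      exact hpA.2 hxC
    have haIp : a ∉ I \ {p} := fun h => haI h.1
    have hbIp : b ∉ I \ {p} := fun h => hbI h.1
    -- the three pair identities
    have hpi1 := pair_identity (G := G) A B
    rw [hA, hB, ha, hb, Fb_singleton hreg, Fb_singleton hreg, ← hI, hAuB] at hpi1
    have hpi2 := pair_identity (G := G) A C
    rw [hA, hC, hp, hc, Fb_singleton hreg, Fb_singleton hreg, hACi, hAuC,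
      D_union_left (by simpa using haIp)] at hpi2
    have hpi3 := pair_identity (G := G) B C
    rw [hB, hC, hq, hr, Fb_singleton hreg, Fb_singleton hreg, hBCi, hBuC,
      D_union_left (by simpa using hbIp)] at hpi3
    have hxIp : x ∈ I \ {p} := ⟨hxI, hxp⟩
    have hyU : y ∉ U := by
      rw [← hAuB]
      rintro (h | h)
      · exact hyA h
      · exact hyB h
    have hA2 : 1 ≤ D G (I \ {p}) Uᶜ := one_le_D hxy hxIp hyU
    -- Fb U decomposition
    have hdIa : Disjoint (I ∪ {a} : Set (Fin n)) ({b} : Set (Fin n)) := by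
      rw [Set.disjoint_right]
      rintro z rfl
      rintro (h | h)
      · exact hbI h
      · exact habne (Set.mem_singleton_iff.mp h).symm
    have hFbU : Fb G U = D G I Uᶜ + D G {a} Uᶜ + D G {b} Uᶜ := by
      rw [Fb, hU, D_union_left hdIa, D_union_left (by simpa using haI)]
    -- lower bound on Fb U via complement
    have hUcard : U.ncard = vv + 1 := by
      rw [hU, Set.ncard_union_eq hdIa (Set.toFinite _) (Set.toFinite _),
        Set.ncard_union_eq (by simpa using haI) (Set.toFinite _) (Set.toFinite _),
        Set.ncard_singleton, Set.ncard_singleton]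
      omega
    have hcompl : U.ncard + Uᶜ.ncard = n := by
      rw [Set.ncard_add_ncard_compl]
      simp
    have hUc2 : 2 ≤ Uᶜ.ncard := by omega
    have hUcn : Uᶜ.ncard ≤ n - 3 := by omega
    have hFbUc := Delta_le_Fb hd hreg hls hUc2 hUcn
    rw [← Fb_compl] at hFbUc
    rw [hFbU] at hFbUc
    have := Delta_le d
    omega

end Main

lemma induced_ext {H H' : G.Subgraph} (h : H.IsInduced) (h' : H'.IsInduced)
    (hv : H.verts = H'.verts) : H = H' := by
  refine SimpleGraph.Subgraph.ext hv ?_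
  funext u w
  apply propext
  constructor
  · intro ha
    exact h' (hv ▸ ha.fst_mem) (hv ▸ ha.snd_mem) ha.adj_sub
  · intro ha
    exact h (hv ▸ ha.fst_mem) (hv ▸ ha.snd_mem) ha.adj_sub

end AMT

/-- For adjacent `x, y` and `3 ≤ v ≤ n - 3`, there are at most two closed subgraphs of a
locally sparse `d`-regular graph on `v` vertices containing `x` and not `y`. -/
theorem at_most_two_closed_subgraphs {n d : ℕ} (hd : 3 ≤ d) (G : SimpleGraph (Fin n))
    (hreg : IsRegularGraph G d) (hls : LocallySparse G d)
    (x y : Fin n) (hxy : G.Adj x y) (v : ℕ) (h3 : 3 ≤ v) (hv : v ≤ n - 3) :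
    {H : G.Subgraph | IsClosedSubgraph G d H ∧ H.verts.ncard = v ∧
      x ∈ H.verts ∧ y ∉ H.verts}.ncard ≤ 2 := by
  by_contra hcon
  push_neg at hcon
  obtain ⟨t, hts, htc⟩ := Set.exists_subset_card_eq (show 3 ≤ _ from hcon)
  obtain ⟨H1, H2, H3, h12, h13, h23, rfl⟩ := Set.ncard_eq_three.mp htc
  have m1 := hts (show H1 ∈ ({H1, H2, H3} : Set G.Subgraph) by simp)
  have m2 := hts (show H2 ∈ ({H1, H2, H3} : Set G.Subgraph) by simp)
  have m3 := hts (show H3 ∈ ({H1, H2, H3} : Set G.Subgraph) by simp)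
  obtain ⟨⟨ind1, bd1⟩, cv1, hx1, hy1⟩ := m1
  obtain ⟨⟨ind2, bd2⟩, cv2, hx2, hy2⟩ := m2
  obtain ⟨⟨ind3, bd3⟩, cv3, hx3, hy3⟩ := m3
  rw [AMT.edgeBoundary_ncard] at bd1 bd2 bd3
  exact AMT.no_three hd hreg hls hxy h3 hv bd1 bd2 bd3 cv1 cv2 cv3 hx1 hx2 hx3 hy1 hy2 hy3
    (fun h => h12 (AMT.induced_ext ind1 ind2 h))
    (fun h => h13 (AMT.induced_ext ind1 ind3 h))
    (fun h => h23 (AMT.induced_ext ind2 ind3 h))
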